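/- arXiv:2510.14482 — 3 statements merged into one kernel-verified Lean document; each statement's English description precedes it below -/
import Mathlib

section
/- Let P be a Borel probability measure on ℝ, let (h_n) and h be functions such that for P-a.e. y, y_n → y implies h_n(y_n) → h(y). Let (Y_t) be i.i.d. with law P and H continuous with E[H(Y₁)] < ∞ and |h_n(y)| ≤ H(y) for all n, y. Then (1/n) Σ_{t=1}^n h_n(Y_t) → E[h(Y₁)] almost surely. -/
open MeasureTheory Filter Metric Topology

lemma unif_of_contconv {hs : ℕ → ℝ → ℝ} {c : ℝ} {y : ℝ}
    (hy : ∀ yn : ℕ → ℝ, Tendsto yn atTop (nhds y) →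
      Tendsto (fun n => hs n (yn n)) atTop (nhds c))
    {ε : ℝ} (hε : 0 < ε) :
    ∃ δ > 0, ∃ N : ℕ, ∀ n ≥ N, ∀ x, |x - y| < δ → |hs n x - c| ≤ ε := by
  by_contra hcon
  push_neg at hcon
  have freq : ∀ k : ℕ, ∃ᶠ n in atTop, ∃ x, |x - y| < 1 / (k + 1) ∧ ε < |hs n x - c| := by
    intro k
    rw [frequently_atTop]
    intro N
    obtain ⟨n, hn, x, hx1, hx2⟩ := hcon (1 / (k + 1)) (by positivity) N
    exact ⟨n, hn, x, hx1, hx2⟩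
  obtain ⟨φ, hφ, hP⟩ := extraction_forall_of_frequently freq
  choose x hx1 hx2 using hP
  classical
  set yn : ℕ → ℝ := fun n => if hk : ∃ k, φ k = n then x hk.choose else y with hyn
  have hyntend : Tendsto yn atTop (𝓝 y) := by
    rw [Metric.tendsto_atTop]
    intro ε' hε'
    obtain ⟨K, hK⟩ := exists_nat_gt (1 / ε')
    refine ⟨φ K, fun n hn => ?_⟩
    by_cases hk : ∃ k, φ k = n
    · have hk' : φ hk.choose = n := hk.choose_spec
      have hKk : K ≤ hk.choose := by
        have := hφ.le_iff_le (a := K) (b := hk.choose)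
        rw [← this]; omega
      have h1 : |x hk.choose - y| < 1 / (hk.choose + 1) := hx1 _
      have h2 : (1 : ℝ) / (hk.choose + 1) < ε' := by
        rw [div_lt_iff₀ (by positivity)]
        rw [div_lt_iff₀ hε'] at hK
        have hc1 : (K : ℝ) ≤ hk.choose + 1 := by exact_mod_cast Nat.le_succ_of_le hKk
        nlinarith
      simp only [hyn, dif_pos hk, Real.dist_eq]
      exact lt_trans h1 h2
    · simp [hyn, dif_neg hk, hε']
  have := (hy yn hyntend).comp hφ.tendsto_atTop
  have hev : ∀ᶠ k in atTop, |hs (φ k) (yn (φ k)) - c| < ε := by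
    have := Metric.tendsto_atTop.mp this ε hε
    obtain ⟨K, hK⟩ := this
    exact eventually_atTop.mpr ⟨K, fun k hk => by simpa [Real.dist_eq] using hK k hk⟩
  obtain ⟨k, hk⟩ := hev.exists
  have hex : ∃ k', φ k' = φ k := ⟨k, rfl⟩
  have hkk : hex.choose = k := hφ.injective hex.choose_spec
  rw [show yn (φ k) = x hex.choose from dif_pos hex, hkk] at hk
  exact absurd (hx2 k) (not_lt.mpr hk.le)

lemma lsc_ballSup (f : ℝ → ENNReal) {r : ℝ} :
    LowerSemicontinuous (fun y => ⨆ x ∈ ball y r, f x) := by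
  intro y c hc
  obtain ⟨x, hx, hfx⟩ : ∃ x ∈ ball y r, c < f x := by
    simpa [lt_iSup_iff] using hc
  have hyx : y ∈ ball x r := mem_ball_comm.mp hx
  filter_upwards [isOpen_ball.mem_nhds hyx] with y' hy'
  exact lt_of_lt_of_le hfx (le_iSup₂ (f := fun x _ => f x) x (mem_ball_comm.mp hy'))

theorem stmt9 {Ω : Type*} [MeasurableSpace Ω] (μ : Measure Ω) [IsProbabilityMeasure μ]
    (P : Measure ℝ) [IsProbabilityMeasure P]
    (Y : ℕ → Ω → ℝ) (hmeas : ∀ t, Measurable (Y t))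
    (hindep : ProbabilityTheory.iIndepFun Y μ)
    (hident : ∀ t, Measure.map (Y t) μ = P)
    (hs : ℕ → ℝ → ℝ) (h H : ℝ → ℝ)
    (hconv : ∀ᵐ y ∂P, ∀ yn : ℕ → ℝ, Tendsto yn atTop (nhds y) →
      Tendsto (fun n => hs n (yn n)) atTop (nhds (h y)))
    (hH : Continuous H) (hHint : Integrable H P)
    (hdom : ∀ n y, |hs n y| ≤ H y) :
    ∀ᵐ ω ∂μ, Tendsto (fun n : ℕ => (n : ℝ)⁻¹ * ∑ t ∈ Finset.range n, hs n (Y t ω))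
      atTop (nhds (∫ y, h y ∂P)) := by
  classical
  have pt : ∀ᵐ y ∂P, Tendsto (fun n => hs n y) atTop (𝓝 (h y)) :=
    hconv.mono fun y hy => hy (fun _ => y) tendsto_const_nhds
  have U : ∀ᵐ y ∂P, ∀ ε : ℝ, 0 < ε → ∃ δ > 0, ∃ N : ℕ, ∀ n ≥ N, ∀ x, |x - y| < δ →
      |hs n x - h y| ≤ ε :=
    hconv.mono fun y hy ε hε => unif_of_contconv hy hε
  have hH0 : ∀ y, 0 ≤ H y := fun y => le_trans (abs_nonneg _) (hdom 0 y)
  have habs : ∀ᵐ y ∂P, |h y| ≤ H y := by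
    filter_upwards [pt] with y hy
    exact le_of_tendsto hy.abs (Eventually.of_forall fun n => hdom n y)
  -- a measurable "good" set
  obtain ⟨G, hGmeas, hGc, hG⟩ : ∃ G : Set ℝ, MeasurableSet G ∧ P Gᶜ = 0 ∧
      ∀ y ∈ G, (Tendsto (fun n => hs n y) atTop (𝓝 (h y))) ∧
        (∀ ε : ℝ, 0 < ε → ∃ δ > 0, ∃ N : ℕ, ∀ n ≥ N, ∀ x, |x - y| < δ →
          |hs n x - h y| ≤ ε) := by
    have hae := pt.and U
    set bad : Set ℝ := {y | ¬ (Tendsto (fun n => hs n y) atTop (𝓝 (h y)) ∧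
        (∀ ε : ℝ, 0 < ε → ∃ δ > 0, ∃ N : ℕ, ∀ n ≥ N, ∀ x, |x - y| < δ →
          |hs n x - h y| ≤ ε))} with hbaddef
    have hbad : P bad = 0 := ae_iff.mp hae
    refine ⟨(toMeasurable P bad)ᶜ, (measurableSet_toMeasurable _ _).compl, ?_, ?_⟩
    · rw [compl_compl, measure_toMeasurable]
      exact hbad
    · intro y hy
      by_contra hpy
      exact hy (subset_toMeasurable _ _ hpy)
  have hGae : ∀ᵐ y ∂P, y ∈ G := by
    rw [ae_iff]
    exact hGc
  -- continuity of h on G and a measurable version h'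
  have hcontOn : ContinuousOn h G := by
    intro y hy
    obtain ⟨hy1, hy2⟩ := hG y hy
    rw [Metric.continuousWithinAt_iff]
    intro ε hε
    obtain ⟨δ, hδ, N, hN⟩ := hy2 (ε / 2) (by positivity)
    refine ⟨δ, hδ, fun {x'} hx' hdist => ?_⟩
    have hx1 := (hG x' hx').1
    have hle : |h x' - h y| ≤ ε / 2 := by
      have tt : Tendsto (fun n => |hs n x' - h y|) atTop (𝓝 |h x' - h y|) :=
        (hx1.sub tendsto_const_nhds).abs
      exact le_of_tendsto tt (eventually_atTop.2
        ⟨N, fun n hn => hN n hn x' (by rwa [Real.dist_eq] at hdist)⟩)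
    rw [Real.dist_eq]
    linarith
  have hAE : AEMeasurable h P := by
    have := hcontOn.aemeasurable (μ := P) hGmeas
    rwa [Measure.restrict_eq_self_of_ae_mem hGae] at this
  set h' := hAE.mk h with hh'def
  have hh'meas : Measurable h' := hAE.measurable_mk
  have hh'eq : h =ᵐ[P] h' := hAE.ae_eq_mk
  -- the dominating sequence
  set g : ℕ → ℝ → ENNReal := fun N x =>
    ⨆ (n : ℕ) (m : ℕ), ENNReal.ofReal |hs (N + n) x - hs (N + m) x| with hgdef
  set A : ℕ → ℝ → ENNReal := fun N y => ⨆ x ∈ ball y (1 / (N + 1)), g N x with hAdef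
  set B : ℕ → ℝ → ℝ := fun N y => (min (A N y) (ENNReal.ofReal (2 * H y))).toReal with hBdef
  have hAmeas : ∀ N, Measurable (A N) := fun N => (lsc_ballSup (g N)).measurable
  have hBmeas : ∀ N, Measurable (B N) := fun N =>
    ((hAmeas N).min ((ENNReal.continuous_ofReal.comp
      (continuous_const.mul hH)).measurable)).ennreal_toReal
  have hB0 : ∀ N y, 0 ≤ B N y := fun N y => ENNReal.toReal_nonneg
  have hBle : ∀ N y, B N y ≤ 2 * H y := by
    intro N y
    calc B N y ≤ (ENNReal.ofReal (2 * H y)).toReal :=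
          ENNReal.toReal_mono ENNReal.ofReal_ne_top (min_le_right _ _)
    _ = 2 * H y := ENNReal.toReal_ofReal (by have := hH0 y; positivity)
  -- the pointwise domination
  have hBd : ∀ᵐ y ∂P, ∀ N n : ℕ, N ≤ n → |hs n y - h' y| ≤ B N y := by
    filter_upwards [pt, hh'eq, habs] with y hy1 hy2 hy3
    intro N n hn
    rw [← hy2]
    have k2 : ENNReal.ofReal |hs n y - h y| ≤ ENNReal.ofReal (2 * H y) := by
      refine ENNReal.ofReal_le_ofReal ?_
      calc |hs n y - h y| ≤ |hs n y| + |h y| := abs_sub _ _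
      _ ≤ H y + H y := add_le_add (hdom n y) hy3
      _ = 2 * H y := by ring
    obtain ⟨k, rfl⟩ := Nat.exists_eq_add_of_le hn
    have hshift : Tendsto (fun m => hs (N + m) y) atTop (𝓝 (h y)) := by
      refine hy1.comp ?_
      simpa [add_comm] using tendsto_add_atTop_nat N
    have k1 : ENNReal.ofReal |hs (N + k) y - h y| ≤ A N y := by
      have t2 : Tendsto (fun m => ENNReal.ofReal |hs (N + k) y - hs (N + m) y|) atTop
          (𝓝 (ENNReal.ofReal |hs (N + k) y - h y|)) :=
        (ENNReal.continuous_ofReal.tendsto _).comp ((tendsto_const_nhds.sub hshift).abs)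
      refine le_of_tendsto t2 (Eventually.of_forall fun m => ?_)
      have hle1 : ENNReal.ofReal |hs (N + k) y - hs (N + m) y| ≤ g N y :=
        le_iSup₂ (f := fun n m => ENNReal.ofReal |hs (N + n) y - hs (N + m) y|) k m
      exact hle1.trans (le_iSup₂ (f := fun x (_ : x ∈ ball y (1 / (N + 1))) => g N x) y
        (mem_ball_self (by positivity)))
    have hmin : ENNReal.ofReal |hs (N + k) y - h y| ≤
        min (A N y) (ENNReal.ofReal (2 * H y)) := le_min k1 k2
    calc |hs (N + k) y - h y| = (ENNReal.ofReal |hs (N + k) y - h y|).toReal :=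
          (ENNReal.toReal_ofReal (abs_nonneg _)).symm
    _ ≤ B N y := ENNReal.toReal_mono
          (ne_top_of_le_ne_top ENNReal.ofReal_ne_top (min_le_right _ _)) hmin
  -- B tends to zero pointwise a.e.
  have hBtend : ∀ᵐ y ∂P, Tendsto (fun N => B N y) atTop (𝓝 0) := by
    filter_upwards [U] with y hU
    rw [Metric.tendsto_atTop]
    intro ε hε
    obtain ⟨δ, hδ, N₀, hN₀⟩ := hU (ε / 3) (by positivity)
    obtain ⟨M, hM⟩ := exists_nat_gt (1 / δ)
    refine ⟨N₀ + M, fun N hN => ?_⟩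
    have hNδ : 1 / (N + 1 : ℝ) < δ := by
      rw [div_lt_iff₀ (by positivity)]
      rw [div_lt_iff₀ hδ] at hM
      have hc1 : (M : ℝ) ≤ N + 1 := by exact_mod_cast by omega
      nlinarith
    have hA' : A N y ≤ ENNReal.ofReal (2 * ε / 3) := by
      refine iSup₂_le fun x hx => iSup₂_le fun n m => ?_
      refine ENNReal.ofReal_le_ofReal ?_
      have hxy : |x - y| < δ := by
        have := mem_ball.mp hx
        rw [Real.dist_eq] at this
        linarith
      have b1 := hN₀ (N + n) (by omega) x hxy
      have b2 := hN₀ (N + m) (by omega) x hxy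
      calc |hs (N + n) x - hs (N + m) x| ≤ |hs (N + n) x - h y| + |h y - hs (N + m) x| :=
            abs_sub_le _ _ _
      _ ≤ ε / 3 + ε / 3 := add_le_add b1 (by rwa [abs_sub_comm])
      _ = 2 * ε / 3 := by ring
    have hBb : B N y ≤ 2 * ε / 3 := by
      calc B N y ≤ (ENNReal.ofReal (2 * ε / 3)).toReal :=
            ENNReal.toReal_mono ENNReal.ofReal_ne_top ((min_le_left _ _).trans hA')
      _ = 2 * ε / 3 := ENNReal.toReal_ofReal (by positivity)
    rw [Real.dist_eq, sub_zero, abs_of_nonneg (hB0 N y)]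
    linarith
  -- integrability
  have hBint : ∀ N, Integrable (B N) P := by
    intro N
    refine Integrable.mono (hHint.const_mul 2) (hBmeas N).aestronglyMeasurable ?_
    refine Eventually.of_forall fun y => ?_
    rw [Real.norm_eq_abs, Real.norm_eq_abs, abs_of_nonneg (hB0 N y),
      abs_of_nonneg (by have := hH0 y; positivity : (0:ℝ) ≤ 2 * H y)]
    exact hBle N y
  have hInt0 : Tendsto (fun N => ∫ y, B N y ∂P) atTop (𝓝 0) := by
    have := tendsto_integral_of_dominated_convergence (μ := P) (F := B)
      (f := fun _ => (0 : ℝ)) (fun y => 2 * H y)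
      (fun N => (hBmeas N).aestronglyMeasurable) (hHint.const_mul 2)
      (fun N => Eventually.of_forall fun y => by
        rw [Real.norm_eq_abs, abs_of_nonneg (hB0 N y)]; exact hBle N y)
      hBtend
    simpa using this
  -- strong law of large numbers helper
  have SL : ∀ f : ℝ → ℝ, Measurable f → Integrable f P →
      ∀ᵐ ω ∂μ, Tendsto (fun n : ℕ => (∑ t ∈ Finset.range n, f (Y t ω)) / n) atTop
        (𝓝 (∫ y, f y ∂P)) := by
    intro f hf hfi
    have hfi' : Integrable (fun ω => f (Y 0 ω)) μ := by
      rw [← hident 0] at hfi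
      exact (integrable_map_measure hf.aestronglyMeasurable (hmeas 0).aemeasurable).mp hfi
    have hind : Pairwise (Function.onFun (ProbabilityTheory.IndepFun · · μ) fun t ω => f (Y t ω)) :=
      fun i j hij => (hindep.indepFun hij).comp hf hf
    have hid : ∀ t, ProbabilityTheory.IdentDistrib (fun ω => f (Y t ω))
        (fun ω => f (Y 0 ω)) μ μ := by
      intro t
      have idY : ProbabilityTheory.IdentDistrib (Y t) (Y 0) μ μ :=
        ⟨(hmeas t).aemeasurable, (hmeas 0).aemeasurable, by rw [hident t, hident 0]⟩
      exact idY.comp hf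
    have hsl := ProbabilityTheory.strong_law_ae_real (fun t ω => f (Y t ω)) hfi' hind hid
    have heq : ∫ ω, f (Y 0 ω) ∂μ = ∫ y, f y ∂P := by
      rw [← hident 0, integral_map (hmeas 0).aemeasurable hf.aestronglyMeasurable]
    rw [heq] at hsl
    exact hsl
  have hh'int : Integrable h' P := by
    refine Integrable.mono hHint hh'meas.aestronglyMeasurable ?_
    filter_upwards [habs, hh'eq] with y h1 h2
    rw [Real.norm_eq_abs, ← h2, Real.norm_eq_abs]
    exact h1.trans (le_abs_self _)
  have hinteq : ∫ y, h y ∂P = ∫ y, h' y ∂P := integral_congr_ae hh'eq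
  have SLh := SL h' hh'meas hh'int
  have SLB : ∀ᵐ ω ∂μ, ∀ N, Tendsto (fun n : ℕ => (∑ t ∈ Finset.range n, B N (Y t ω)) / n)
      atTop (𝓝 (∫ y, B N y ∂P)) := ae_all_iff.mpr fun N => SL (B N) (hBmeas N) (hBint N)
  have hBdω : ∀ᵐ ω ∂μ, ∀ t N n : ℕ, N ≤ n → |hs n (Y t ω) - h' (Y t ω)| ≤ B N (Y t ω) := by
    rw [ae_all_iff]
    intro t
    have hmap : ∀ᵐ y ∂(Measure.map (Y t) μ), ∀ N n : ℕ, N ≤ n →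
        |hs n y - h' y| ≤ B N y := by
      rw [hident t]; exact hBd
    exact ae_of_ae_map (hmeas t).aemeasurable hmap
  -- assembly
  filter_upwards [SLh, SLB, hBdω] with ω hω1 hω2 hω3
  rw [hinteq, Metric.tendsto_atTop]
  intro ε hε
  obtain ⟨N, hN⟩ : ∃ N, ∫ y, B N y ∂P < ε / 3 :=
    ((tendsto_order.1 hInt0).2 (ε / 3) (by positivity)).exists
  have e1 : ∀ᶠ n : ℕ in atTop, (∑ t ∈ Finset.range n, B N (Y t ω)) / n < ε / 3 :=
    (tendsto_order.1 (hω2 N)).2 (ε / 3) hN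
  have e2 : ∀ᶠ n : ℕ in atTop,
      |(∑ t ∈ Finset.range n, h' (Y t ω)) / n - ∫ y, h' y ∂P| < ε / 3 := by
    obtain ⟨K, hK⟩ := Metric.tendsto_atTop.mp hω1 (ε / 3) (by positivity)
    exact eventually_atTop.2 ⟨K, fun n hn => by simpa [Real.dist_eq] using hK n hn⟩
  have e3 : ∀ᶠ n : ℕ in atTop, N ≤ n ∧ 1 ≤ n :=
    eventually_atTop.2 ⟨max N 1, fun n hn =>
      ⟨le_trans (le_max_left _ _) hn, le_trans (le_max_right _ _) hn⟩⟩
  obtain ⟨K, hK⟩ := eventually_atTop.1 (e1.and (e2.and e3))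
  refine ⟨K, fun n hn => ?_⟩
  obtain ⟨c1, c2, hnN, hn1⟩ := hK n hn
  have hnpos : (0 : ℝ) < n := by exact_mod_cast hn1
  rw [Real.dist_eq]
  have key : |(n : ℝ)⁻¹ * ∑ t ∈ Finset.range n, hs n (Y t ω) -
      (∑ t ∈ Finset.range n, h' (Y t ω)) / n| ≤ (∑ t ∈ Finset.range n, B N (Y t ω)) / n := by
    rw [inv_mul_eq_div, div_sub_div_same]
    calc |(∑ t ∈ Finset.range n, hs n (Y t ω) - ∑ t ∈ Finset.range n, h' (Y t ω)) / n|
        = |∑ t ∈ Finset.range n, (hs n (Y t ω) - h' (Y t ω))| / n := by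
          rw [← Finset.sum_sub_distrib, abs_div, abs_of_pos hnpos]
    _ ≤ (∑ t ∈ Finset.range n, |hs n (Y t ω) - h' (Y t ω)|) / n := by
          gcongr
          exact Finset.abs_sum_le_sum_abs _ _
    _ ≤ (∑ t ∈ Finset.range n, B N (Y t ω)) / n := by
          gcongr with t ht
          exact hω3 t N n hnN
  calc |(n : ℝ)⁻¹ * ∑ t ∈ Finset.range n, hs n (Y t ω) - ∫ y, h' y ∂P|
      ≤ |(n : ℝ)⁻¹ * ∑ t ∈ Finset.range n, hs n (Y t ω) -
          (∑ t ∈ Finset.range n, h' (Y t ω)) / n| +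
        |(∑ t ∈ Finset.range n, h' (Y t ω)) / n - ∫ y, h' y ∂P| := abs_sub_le _ _ _
  _ < ε / 3 + ε / 3 := add_lt_add_of_le_of_lt (key.trans c1.le) c2
  _ < ε := by linarith
end

section
/- Let g₁,...,g_k be pairwise distinct Gaussian densities and w¹, w² ∈ S_k. If Σ_i w¹_i g_i = Σ_i w²_i g_i as functions on ℝ, then w¹ = w². (Identifiability of finite Gaussian mixtures with fixed distinct components.) -/
open Filter Topology


/-- The density of the normal distribution with mean `μ` and standard deviation `σ`. -/
noncomputable def gauss (μ σ y : ℝ) : ℝ :=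
  (Real.sqrt (2 * Real.pi) * σ)⁻¹ * Real.exp (-((y - μ) ^ 2) / (2 * σ ^ 2))

lemma gauss_div (μ σ μ₀ σ₀ y : ℝ) (hσ : 0 < σ) :
    gauss μ σ y / gauss μ₀ σ₀ y
      = (σ₀ / σ) * Real.exp (-((y - μ)^2)/(2*σ^2) + ((y - μ₀)^2)/(2*σ₀^2)) := by
  unfold gauss
  have h2π : (0:ℝ) < Real.sqrt (2 * Real.pi) := Real.sqrt_pos.mpr (by positivity)
  have he : Real.exp (-(y - μ₀) ^ 2 / (2 * σ₀ ^ 2)) ≠ 0 := (Real.exp_pos _).ne'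
  rw [Real.exp_add]
  have : Real.exp ((y - μ₀) ^ 2 / (2 * σ₀ ^ 2)) = (Real.exp (-(y - μ₀) ^ 2 / (2 * σ₀ ^ 2)))⁻¹ := by
    rw [← Real.exp_neg]; ring_nf
  rw [this]
  field_simp

lemma ratio_tendsto (μ σ μ₀ σ₀ : ℝ) (hσ : 0 < σ) (hσ₀ : 0 < σ₀)
    (h : σ < σ₀ ∨ (σ = σ₀ ∧ μ < μ₀)) :
    Tendsto (fun y => gauss μ σ y / gauss μ₀ σ₀ y) atTop (𝓝 0) := by
  set A : ℝ := 1/(2*σ₀^2) - 1/(2*σ^2) with hA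
  set B : ℝ := μ/σ^2 - μ₀/σ₀^2 with hB
  set C : ℝ := μ₀^2/(2*σ₀^2) - μ^2/(2*σ^2) with hC
  have hexp : ∀ y : ℝ, -((y - μ)^2)/(2*σ^2) + ((y - μ₀)^2)/(2*σ₀^2) = A * y^2 + B * y + C := by
    intro y
    rw [hA, hB, hC]
    field_simp
    ring
  have hE : Tendsto (fun y : ℝ => A * y^2 + B * y + C) atTop atBot := by
    rcases h with h | ⟨h1, h2⟩
    · have hAneg : A < 0 := by
        rw [hA]
        have : σ^2 < σ₀^2 := by nlinarith
        have h1 : 1/(2*σ₀^2) < 1/(2*σ^2) := by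
          apply one_div_lt_one_div_of_lt <;> nlinarith
        linarith
      have h1 : Tendsto (fun y : ℝ => A + B / y + C / y^2) atTop (𝓝 A) := by
        have : Tendsto (fun y : ℝ => A + B / y + C / y^2) atTop (𝓝 (A + 0 + 0)) :=
          ((tendsto_const_nhds.add (tendsto_const_nhds.div_atTop tendsto_id)).add
            (tendsto_const_nhds.div_atTop (tendsto_pow_atTop two_ne_zero)))
        simpa using this
      refine (h1.neg_mul_atTop hAneg (tendsto_pow_atTop two_ne_zero)).congr' ?_
      filter_upwards [eventually_ge_atTop (1:ℝ)] with y hy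
      have hy0 : y ≠ 0 := by linarith
      field_simp
    · have hA0 : A = 0 := by rw [hA, h1]; ring
      have hBneg : B < 0 := by
        rw [hB, h1]
        have h3 : μ / σ₀ ^ 2 < μ₀ / σ₀ ^ 2 := by
          exact div_lt_div_of_pos_right h2 (by positivity)
        linarith
      have : Tendsto (fun y : ℝ => B * y + C) atTop atBot :=
        (tendsto_id.const_mul_atTop_of_neg hBneg).atBot_add tendsto_const_nhds
      refine this.congr (fun y => ?_)
      rw [hA0]; ring
  have hlim : Tendsto (fun y : ℝ => (σ₀/σ) * Real.exp (A * y^2 + B * y + C)) atTop (𝓝 ((σ₀/σ) * 0)) :=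
    (Real.tendsto_exp_atBot.comp hE).const_mul _
  rw [mul_zero] at hlim
  refine hlim.congr (fun y => ?_)
  rw [gauss_div _ _ _ _ _ hσ, hexp]


lemma gauss_pos (μ : ℝ) {σ : ℝ} (hσ : 0 < σ) (y : ℝ) : 0 < gauss μ σ y := by
  unfold gauss
  have := Real.pi_pos
  positivity

lemma gauss_aux {k : ℕ} (μ σ : Fin k → ℝ) (hσ : ∀ i, 0 < σ i)
    (hdist : ∀ i j, i ≠ j → (μ i, σ i) ≠ (μ j, σ j)) (c : Fin k → ℝ) :
    ∀ S : Finset (Fin k),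
      (∀ y : ℝ, ∑ i ∈ S, c i * gauss (μ i) (σ i) y = 0) → ∀ i ∈ S, c i = 0 := by
  intro S
  induction S using Finset.strongInduction with
  | _ S ih =>
    intro hzero i hi
    have hne : S.Nonempty := ⟨i, hi⟩
    obtain ⟨i₀, hi₀, hmax⟩ := S.exists_max_image (fun j => toLex (σ j, μ j)) hne
    -- c i₀ = 0 via limit
    have hdom : ∀ j ∈ S, j ≠ i₀ → σ j < σ i₀ ∨ (σ j = σ i₀ ∧ μ j < μ i₀) := by
      intro j hj hji
      have hle := hmax j hj
      have hne' : (σ j, μ j) ≠ (σ i₀, μ i₀) := by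
        intro h
        exact hdist j i₀ hji (by rw [Prod.mk.injEq] at h ⊢; exact ⟨h.2, h.1⟩)
      have hlt : toLex (σ j, μ j) < toLex (σ i₀, μ i₀) :=
        lt_of_le_of_ne hle (fun h => hne' (toLex.injective h))
      rcases Prod.Lex.lt_iff.mp hlt with h | ⟨h1, h2⟩
      · exact Or.inl h
      · exact Or.inr ⟨h1, h2⟩
    have hci₀ : c i₀ = 0 := by
      have hlim : Tendsto
          (fun y => ∑ j ∈ S, c j * (gauss (μ j) (σ j) y / gauss (μ i₀) (σ i₀) y))
          atTop (𝓝 (∑ j ∈ S, c j * (if j = i₀ then 1 else 0))) := by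
        refine tendsto_finset_sum _ fun j hj => ?_
        by_cases hji : j = i₀
        · subst hji
          refine tendsto_const_nhds.congr fun y => ?_
          rw [div_self (gauss_pos (μ j) (hσ j) y).ne']
          simp
        · simp only [if_neg hji, mul_zero]
          simpa using (ratio_tendsto (μ j) (σ j) (μ i₀) (σ i₀) (hσ j) (hσ i₀) (hdom j hj hji)).const_mul (c j)
      have hsum : (∑ j ∈ S, c j * (if j = i₀ then 1 else 0)) = c i₀ := by
        rw [Finset.sum_eq_single i₀]
        · simp
        · intro b _ hb; simp [hb]
        · intro h; exact absurd hi₀ h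
      rw [hsum] at hlim
      have hzero' : Tendsto
          (fun y => ∑ j ∈ S, c j * (gauss (μ j) (σ j) y / gauss (μ i₀) (σ i₀) y))
          atTop (𝓝 0) := by
        refine tendsto_const_nhds.congr fun y => ?_
        have : ∑ j ∈ S, c j * (gauss (μ j) (σ j) y / gauss (μ i₀) (σ i₀) y)
            = (∑ j ∈ S, c j * gauss (μ j) (σ j) y) / gauss (μ i₀) (σ i₀) y := by
          rw [Finset.sum_div]
          exact Finset.sum_congr rfl fun j _ => (mul_div_assoc _ _ _).symm
        rw [this, hzero y, zero_div]
      exact tendsto_nhds_unique hlim hzero'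
    -- induct on S.erase i₀
    have herase : ∀ y : ℝ, ∑ j ∈ S.erase i₀, c j * gauss (μ j) (σ j) y = 0 := by
      intro y
      have := hzero y
      rw [← Finset.add_sum_erase S _ hi₀, hci₀, zero_mul, zero_add] at this
      exact this
    have hrec := ih (S.erase i₀) (Finset.erase_ssubset hi₀) herase
    by_cases hii : i = i₀
    · rw [hii]; exact hci₀
    · exact hrec i (Finset.mem_erase.mpr ⟨hii, hi⟩)

theorem stmt14 (k : ℕ) (μ σ : Fin k → ℝ) (hσ : ∀ i, 0 < σ i)
    (hdist : ∀ i j, i ≠ j → (μ i, σ i) ≠ (μ j, σ j))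
    (w₁ w₂ : Fin k → ℝ)
    (hw₁0 : ∀ i, 0 ≤ w₁ i) (hw₁1 : ∑ i, w₁ i = 1)
    (hw₂0 : ∀ i, 0 ≤ w₂ i) (hw₂1 : ∑ i, w₂ i = 1)
    (heq : ∀ y : ℝ, ∑ i, w₁ i * gauss (μ i) (σ i) y = ∑ i, w₂ i * gauss (μ i) (σ i) y) :
    w₁ = w₂ := by
  have h := gauss_aux μ σ hσ hdist (fun i => w₁ i - w₂ i) Finset.univ ?_
  · funext i
    have := h i (Finset.mem_univ i)
    linarith
  · intro y
    have := heq y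
    simp only [sub_mul, Finset.sum_sub_distrib]
    linarith
end

section
/- Suppose the random variable Y with bounded density f satisfies: for every θ in a subset B of the parameter space, a sequence of sets A_θ ⊂ ℝ each consisting of at most k+1 intervals satisfies P(Y ∈ A_θ) ≥ 3/4. Then almost surely, inf_{θ∈B} P_n(A_θ) ≥ 1/2 eventually, where P_n is the empirical measure of i.i.d. copies of Y. -/
open MeasureTheory Filter Topology
open scoped ENNReal Classical


lemma slln_set18 {Ω : Type*} [MeasurableSpace Ω] (μ : Measure Ω) [IsProbabilityMeasure μ]
    (ν : Measure ℝ) (Y : ℕ → Ω → ℝ) (hmeas : ∀ t, Measurable (Y t))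
    (hindep : ProbabilityTheory.iIndepFun Y μ)
    (hident : ∀ t, Measure.map (Y t) μ = ν)
    (S : Set ℝ) (hS : MeasurableSet S) :
    ∀ᵐ ω ∂μ, Tendsto
      (fun n : ℕ => (n : ℝ)⁻¹ * (((Finset.range n).filter fun t => Y t ω ∈ S).card : ℝ))
      atTop (𝓝 (ν S).toReal) := by
  set g : ℝ → ℝ := S.indicator 1 with hgdef
  have hg : Measurable g := measurable_one.indicator hS
  have hint : Integrable (g ∘ Y 0) μ := by
    refine Integrable.mono' (integrable_const 1) (hg.comp (hmeas 0)).aestronglyMeasurable ?_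
    filter_upwards with ω
    by_cases h : Y 0 ω ∈ S <;> simp [g, Set.indicator_apply, h]
  have hid : ∀ i, ProbabilityTheory.IdentDistrib (g ∘ Y i) (g ∘ Y 0) μ μ := fun i =>
    (⟨(hmeas i).aemeasurable, (hmeas 0).aemeasurable, by rw [hident i, hident 0]⟩ :
      ProbabilityTheory.IdentDistrib (Y i) (Y 0) μ μ).comp hg
  have hind : Pairwise (Function.onFun (ProbabilityTheory.IndepFun · · μ) fun i => g ∘ Y i) :=
    fun i j hij => (hindep.indepFun hij).comp hg hg
  have H := ProbabilityTheory.strong_law_ae_real (fun i => g ∘ Y i) hint hind hid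
  have hμ : (∫ x, (g ∘ Y 0) x ∂μ) = (ν S).toReal := by
    rw [show (∫ x, (g ∘ Y 0) x ∂μ) = ∫ y, g y ∂(Measure.map (Y 0) μ) from
      (integral_map (hmeas 0).aemeasurable hg.aestronglyMeasurable).symm, hident 0]
    rw [hgdef, show (S.indicator (1 : ℝ → ℝ)) = S.indicator (fun _ => (1:ℝ)) from rfl,
      integral_indicator_const (1 : ℝ) hS, smul_eq_mul, mul_one]
    rfl
  filter_upwards [H] with ω hω
  have key : ∀ n : ℕ,
      (n : ℝ)⁻¹ * (((Finset.range n).filter fun t => Y t ω ∈ S).card : ℝ)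
        = (∑ i ∈ Finset.range n, (fun i => g ∘ Y i) i ω) / n := by
    intro n
    rw [Finset.card_filter, div_eq_inv_mul]
    congr 1
    push_cast
    refine Finset.sum_congr rfl fun i _ => ?_
    by_cases h : Y i ω ∈ S <;> simp [g, Set.indicator_apply, h]
  rw [show (∫ x, (fun i => g ∘ Y i) 0 x ∂μ) = (ν S).toReal from hμ] at hω
  simpa only [key] using hω

theorem stmt18 {Ω Θ : Type*} [MeasurableSpace Ω] (μ : Measure Ω) [IsProbabilityMeasure μ]
    (k : ℕ) (f : ℝ → ℝ) (C : ℝ) (hfm : Measurable f) (hf0 : ∀ y, 0 ≤ f y)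
    (hfB : ∀ y, f y ≤ C)
    (Y : ℕ → Ω → ℝ) (hmeas : ∀ t, Measurable (Y t))
    (hindep : ProbabilityTheory.iIndepFun Y μ)
    (hident : ∀ t, Measure.map (Y t) μ
      = volume.withDensity fun y => ENNReal.ofReal (f y))
    (B : Set Θ) (A : Θ → Set ℝ)
    (hintervals : ∀ θ ∈ B, ∃ I : Fin (k + 1) → Set ℝ,
      (∀ j, (I j).OrdConnected) ∧ A θ = ⋃ j, I j)
    (hmass : ∀ θ ∈ B, (3 / 4 : ℝ≥0∞)
      ≤ (volume.withDensity fun y => ENNReal.ofReal (f y)) (A θ)) :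
    ∀ᵐ ω ∂μ, ∀ᶠ n : ℕ in atTop, ∀ θ ∈ B,
      (1 / 2 : ℝ)
        ≤ (n : ℝ)⁻¹ * ((Finset.range n).filter fun t => Y t ω ∈ A θ).card := by
  set ν : Measure ℝ := volume.withDensity fun y => ENNReal.ofReal (f y) with hν
  haveI hνprob : IsProbabilityMeasure ν := by
    constructor
    rw [← hident 0, Measure.map_apply (hmeas 0) MeasurableSet.univ, Set.preimage_univ,
      measure_univ]
  have hC0 : 0 ≤ C := le_trans (hf0 0) (hfB 0)
  have hνle : ∀ S : Set ℝ, ν S ≤ ENNReal.ofReal C * volume S := by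
    intro S
    calc ν S ≤ (volume.withDensity fun _ => ENNReal.ofReal C) S := by
          refine Measure.le_iff'.1 (withDensity_mono ?_) S
          filter_upwards with y
          exact ENNReal.ofReal_le_ofReal (hfB y)
      _ = ENNReal.ofReal C * volume S := by rw [withDensity_const]; rfl
  -- parameters
  set K : ℝ := (k : ℝ) + 1 with hK
  have hK1 : (1 : ℝ) ≤ K := by simp [hK]
  have hK0 : (0 : ℝ) < K := by linarith
  set δ : ℝ := 1 / (32 * K * (C + 1)) with hδdef
  have hδ : 0 < δ := by positivity
  set ε : ℝ≥0∞ := ENNReal.ofReal (1 / (32 * K)) with hε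
  have hcell : ∀ a : ℝ, ν (Set.Icc a (a + δ)) ≤ ε := by
    intro a
    calc ν (Set.Icc a (a + δ)) ≤ ENNReal.ofReal C * volume (Set.Icc a (a + δ)) := hνle _
      _ = ENNReal.ofReal C * ENNReal.ofReal δ := by rw [Real.volume_Icc]; ring_nf
      _ = ENNReal.ofReal (C * δ) := (ENNReal.ofReal_mul hC0).symm
      _ ≤ ε := by
          rw [hε]
          refine ENNReal.ofReal_le_ofReal ?_
          rw [hδdef, mul_one_div, div_le_div_iff₀ (by positivity) (by positivity)]
          nlinarith
  -- choose tail bound M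
  have htail0 : Tendsto (fun m : ℕ => ν (Set.Icc (-(m:ℝ)) (m:ℝ))ᶜ) atTop (𝓝 0) := by
    have hempty : (⋂ m : ℕ, (Set.Icc (-(m:ℝ)) (m:ℝ))ᶜ) = ∅ := by
      ext x
      simp only [Set.mem_iInter, Set.mem_compl_iff, Set.mem_Icc, Set.mem_empty_iff_false,
        iff_false, not_forall, not_not]
      obtain ⟨m, hm⟩ := exists_nat_ge |x|
      exact ⟨m, by linarith [neg_abs_le x], by linarith [le_abs_self x]⟩
    have hanti : Antitone (fun m : ℕ => (Set.Icc (-(m:ℝ)) (m:ℝ))ᶜ) := by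
      intro m m' h
      apply Set.compl_subset_compl.2
      have hc : (m : ℝ) ≤ (m' : ℝ) := Nat.cast_le.2 h
      exact Set.Icc_subset_Icc (by linarith) hc
    have := tendsto_measure_iInter_atTop (μ := ν)
      (fun m => (measurableSet_Icc.compl).nullMeasurableSet)
      hanti ⟨0, measure_ne_top _ _⟩
    rwa [hempty, measure_empty] at this
  obtain ⟨M, hM⟩ : ∃ M : ℕ, ν (Set.Icc (-(M:ℝ)) (M:ℝ))ᶜ ≤ ENNReal.ofReal (1/16) := by
    have := (tendsto_order.1 htail0).2 (ENNReal.ofReal (1/16)) (by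
      simp [ENNReal.ofReal_pos])
    exact (this.exists.imp fun m hm => hm.le)
  -- grid
  set N : ℕ := ⌈(2 * (M:ℝ)) / δ⌉₊ + 1 with hN
  set cell : ℕ → Set ℝ := fun i => Set.Icc (-(M:ℝ) + i * δ) (-(M:ℝ) + i * δ + δ) with hcelldef
  have hcover : ∀ x ∈ Set.Icc (-(M:ℝ)) (M:ℝ), ∃ i : Fin N, x ∈ cell i := by
    intro x hx
    have h0 : 0 ≤ (x + M) / δ := div_nonneg (by linarith [hx.1]) hδ.le
    refine ⟨⟨⌊(x + M)/δ⌋₊, ?_⟩, ?_, ?_⟩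
    · have h1 : (x + M)/δ ≤ (2 * (M:ℝ))/δ := by
        rw [div_le_div_iff₀ hδ hδ]
        nlinarith [hx.2, hδ]
      calc ⌊(x + M)/δ⌋₊ ≤ ⌈(x + M)/δ⌉₊ := Nat.floor_le_ceil _
        _ ≤ ⌈(2 * (M:ℝ))/δ⌉₊ := Nat.ceil_le_ceil (by exact h1)
        _ < N := by omega
    · have := Nat.floor_le h0
      have h2 : (⌊(x + M)/δ⌋₊ : ℝ) * δ ≤ x + M := by
        rw [← le_div_iff₀ hδ]  -- maybe le_div_iff
        exact this
      linarith
    · have := Nat.lt_floor_add_one ((x + M)/δ)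
      have h2 : x + M < ((⌊(x + M)/δ⌋₊ : ℝ) + 1) * δ := by
        rw [← div_lt_iff₀ hδ]
        exact this
      push_cast at h2 ⊢
      nlinarith
  set G : Finset (Fin N) → Set ℝ := fun s => ⋃ i ∈ s, cell i.1 with hG
  have hGmeas : ∀ s, MeasurableSet (G s) := fun s =>
    MeasurableSet.biUnion s.countable_toSet fun i _ => measurableSet_Icc
  have hae : ∀ᵐ ω ∂μ, ∀ s : Finset (Fin N), Tendsto
      (fun n : ℕ => (n : ℝ)⁻¹ * (((Finset.range n).filter fun t => Y t ω ∈ G s).card : ℝ))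
      atTop (𝓝 (ν (G s)).toReal) := by
    rw [ae_all_iff]
    intro s
    exact slln_set18 μ ν Y hmeas hindep (fun t => hident t) (G s) (hGmeas s)
  filter_upwards [hae] with ω hω
  have hev : ∀ᶠ n : ℕ in atTop, ∀ s : Finset (Fin N),
      (ν (G s)).toReal - 1/16 ≤
        (n : ℝ)⁻¹ * (((Finset.range n).filter fun t => Y t ω ∈ G s).card : ℝ) := by
    rw [eventually_all]
    intro s
    exact (hω s).eventually (eventually_ge_nhds (sub_lt_self _ (by norm_num)))
  filter_upwards [hev] with n hn θ hθ
  obtain ⟨I, hconn, hAI⟩ := hintervals θ hθ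
  set sθ : Finset (Fin N) := Finset.univ.filter (fun i => cell i.1 ⊆ A θ) with hsθ
  have hJA : G sθ ⊆ A θ := Set.iUnion₂_subset fun i hi => (Finset.mem_filter.1 hi).2
  -- bad cells
  set T : Fin (k+1) → Finset (Fin N) :=
    fun j => Finset.univ.filter (fun i => (cell i.1 ∩ I j).Nonempty) with hT
  set bad : Fin (k+1) → Set ℝ := fun j =>
    if h : (T j).Nonempty then cell ((T j).min' h).1 ∪ cell ((T j).max' h).1 else ∅ with hbad
  have hincl : A θ ⊆ G sθ ∪ ((Set.Icc (-(M:ℝ)) (M:ℝ))ᶜ ∪ ⋃ j, bad j) := by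
    intro x hx
    by_cases hxJ : x ∈ G sθ
    · exact Or.inl hxJ
    refine Or.inr ?_
    by_cases hxM : x ∈ Set.Icc (-(M:ℝ)) (M:ℝ)
    swap
    · exact Or.inl hxM
    refine Or.inr ?_
    obtain ⟨i, hi⟩ := hcover x hxM
    obtain ⟨j, hj⟩ := Set.mem_iUnion.1 (hAI ▸ hx)
    have hiT : i ∈ T j := Finset.mem_filter.2 ⟨Finset.mem_univ _, ⟨x, hi, hj⟩⟩
    have hTne : (T j).Nonempty := ⟨i, hiT⟩
    refine Set.mem_iUnion.2 ⟨j, ?_⟩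
    simp only [hbad, dif_pos hTne]
    by_cases h1 : i = (T j).min' hTne
    · exact Or.inl (h1 ▸ hi)
    by_cases h2 : i = (T j).max' hTne
    · exact Or.inr (h2 ▸ hi)
    -- middle cell: contained in I j, contradiction
    exfalso
    have hlt1 : ((T j).min' hTne).1 < i.1 :=
      Fin.lt_iff_val_lt_val.mp (lt_of_le_of_ne (Finset.min'_le _ _ hiT) (Ne.symm h1))
    have hlt2 : i.1 < ((T j).max' hTne).1 :=
      Fin.lt_iff_val_lt_val.mp (lt_of_le_of_ne (Finset.le_max' _ _ hiT) h2)
    obtain ⟨x₀, hx₀c, hx₀I⟩ := (Finset.mem_filter.1 ((T j).min'_mem hTne)).2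
    obtain ⟨x₁, hx₁c, hx₁I⟩ := (Finset.mem_filter.1 ((T j).max'_mem hTne)).2
    have hsub : cell i.1 ⊆ I j := by
      intro z hz
      refine (hconn j).out hx₀I hx₁I ⟨?_, ?_⟩
      · have e1 : x₀ ≤ -(M:ℝ) + ((T j).min' hTne).1 * δ + δ := hx₀c.2
        have e2 : -(M:ℝ) + i.1 * δ ≤ z := hz.1
        have e3 : (((T j).min' hTne).1 : ℝ) + 1 ≤ i.1 := by exact_mod_cast hlt1
        nlinarith
      · have e1 : -(M:ℝ) + ((T j).max' hTne).1 * δ ≤ x₁ := hx₁c.1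
        have e2 : z ≤ -(M:ℝ) + i.1 * δ + δ := hz.2
        have e3 : (i.1 : ℝ) + 1 ≤ ((T j).max' hTne).1 := by exact_mod_cast hlt2
        nlinarith
    have hiθ : i ∈ sθ := Finset.mem_filter.2 ⟨Finset.mem_univ _,
      hsub.trans (hAI ▸ Set.subset_iUnion I j)⟩
    exact hxJ (Set.mem_biUnion hiθ hi)
  have hbadν : ∀ j, ν (bad j) ≤ 2 * ε := by
    intro j
    simp only [hbad]
    split_ifs with h
    · calc ν (cell ((T j).min' h).1 ∪ cell ((T j).max' h).1)
          ≤ ν (cell ((T j).min' h).1) + ν (cell ((T j).max' h).1) := measure_union_le _ _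
        _ ≤ ε + ε := add_le_add (hcell _) (hcell _)
        _ = 2 * ε := (two_mul ε).symm
    · simp
  have hν1 : ν (A θ) ≤ ν (G sθ) + ENNReal.ofReal (1/8) := by
    calc ν (A θ) ≤ ν (G sθ ∪ ((Set.Icc (-(M:ℝ)) (M:ℝ))ᶜ ∪ ⋃ j, bad j)) := measure_mono hincl
      _ ≤ ν (G sθ) + (ν (Set.Icc (-(M:ℝ)) (M:ℝ))ᶜ + ν (⋃ j, bad j)) :=
          le_trans (measure_union_le _ _) (add_le_add_right (measure_union_le _ _) _)
      _ ≤ ν (G sθ) + (ENNReal.ofReal (1/16) + ENNReal.ofReal (1/16)) := by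
          refine add_le_add_right (add_le_add hM ?_) _
          calc ν (⋃ j, bad j) ≤ ∑ j : Fin (k+1), ν (bad j) := measure_iUnion_fintype_le _ _
            _ ≤ ∑ _j : Fin (k+1), 2 * ε := Finset.sum_le_sum fun j _ => hbadν j
            _ = (k+1) • (2 * ε) := by rw [Finset.sum_const, Finset.card_univ, Fintype.card_fin]
            _ = ((k+1 : ℕ) : ℝ≥0∞) * (2 * ε) := nsmul_eq_mul _ _
            _ = ENNReal.ofReal K * (ENNReal.ofReal 2 * ENNReal.ofReal (1/(32*K))) := by
                rw [hε]
                congr 1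
                · rw [hK]; push_cast; rw [ENNReal.ofReal_add (by positivity) (by norm_num)]
                  simp [ENNReal.ofReal_natCast, ENNReal.ofReal_one]
                · congr 1; simp [ENNReal.ofReal_ofNat]
            _ = ENNReal.ofReal (K * (2 * (1/(32*K)))) := by
                rw [← ENNReal.ofReal_mul (by norm_num), ← ENNReal.ofReal_mul hK0.le]
            _ = ENNReal.ofReal (1/16) := by
                congr 1
                field_simp
                ring
      _ = ν (G sθ) + ENNReal.ofReal (1/8) := by
          rw [← ENNReal.ofReal_add (by norm_num) (by norm_num)]
          norm_num
  -- real inequalities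
  have h34 : (3/4 : ℝ) ≤ (ν (A θ)).toReal := by
    have h := ENNReal.toReal_mono (measure_ne_top ν _) (hmass θ hθ)
    have h' : ((3 : ℝ≥0∞)/4).toReal = (3/4 : ℝ) := by
      rw [ENNReal.toReal_div]; norm_num
    rw [h'] at h
    exact h
  have h2 : (ν (A θ)).toReal ≤ (ν (G sθ)).toReal + 1/8 := by
    have h := ENNReal.toReal_mono
      (ENNReal.add_ne_top.2 ⟨measure_ne_top _ _, ENNReal.ofReal_ne_top⟩) hν1
    rwa [ENNReal.toReal_add (measure_ne_top _ _) ENNReal.ofReal_ne_top,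
      ENNReal.toReal_ofReal (by norm_num)] at h
  have hemp := hn sθ
  have hmono : ((Finset.range n).filter fun t => Y t ω ∈ G sθ).card
      ≤ ((Finset.range n).filter fun t => Y t ω ∈ A θ).card := by
    apply Finset.card_le_card
    intro t ht
    rw [Finset.mem_filter] at ht ⊢
    exact ⟨ht.1, hJA ht.2⟩
  have hmono' : (n : ℝ)⁻¹ * (((Finset.range n).filter fun t => Y t ω ∈ G sθ).card : ℝ)
      ≤ (n : ℝ)⁻¹ * (((Finset.range n).filter fun t => Y t ω ∈ A θ).card : ℝ) :=
    mul_le_mul_of_nonneg_left (Nat.cast_le.2 hmono) (inv_nonneg.2 (Nat.cast_nonneg n))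
  linarith
end
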